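/- Let r ≥ 2 and let H be a connected r-uniform hypergraph on n vertices with strictly more than n hyperedges. If H contains a Berge cycle of length r+1, then H contains a Berge path of length r+1. -/

import Mathlib

/-- A Berge path of length `k` in the hypergraph with edge collection `H`:
`k` distinct hyperedges `e 0, …, e (k-1)` and `k+1` distinct vertices
`v 0, …, v k` such that `v i, v (i+1) ∈ e i` for all `0 ≤ i < k`.
The path starts at `v 0`. -/
def IsBergePath {V : Type*} (H : Finset (Finset V)) (k : ℕ)
    (e : Fin k → Finset V) (v : Fin (k + 1) → V) : Prop :=
  Function.Injective e ∧ Function.Injective v ∧ (∀ i, e i ∈ H) ∧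
    ∀ i : Fin k, v i.castSucc ∈ e i ∧ v i.succ ∈ e i

/-- A Berge cycle of length `k` in the hypergraph with edge collection `H`:
`k` distinct hyperedges `e 0, …, e (k-1)` and `k` distinct vertices
`v 0, …, v (k-1)` such that `v i, v ((i+1) mod k) ∈ e i` for all `0 ≤ i < k`. -/
def IsBergeCycle {V : Type*} (H : Finset (Finset V)) (k : ℕ)
    (e : Fin k → Finset V) (v : Fin k → V) : Prop :=
  Function.Injective e ∧ Function.Injective v ∧ (∀ i, e i ∈ H) ∧
    ∀ i : Fin k, v i ∈ e i ∧ v ⟨(i.val + 1) % k, Nat.mod_lt _ i.pos⟩ ∈ e i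

/-- A hypergraph is connected if between any two of its vertices there is a Berge path. -/
def HypergraphConnected {V : Type*} (H : Finset (Finset V)) : Prop :=
  ∀ u w : V, ∃ (k : ℕ) (e : Fin k → Finset V) (p : Fin (k + 1) → V),
    IsBergePath H k e p ∧ p 0 = u ∧ p (Fin.last k) = w

open Fin.NatCast

/-- In a connected `r`-uniform hypergraph on `n` vertices with more than `n`
hyperedges, a Berge cycle of length `r+1` yields a Berge path of length `r+1`. -/
theorem berge_path_of_berge_cycle (V : Type*) [Fintype V] (r : ℕ)
    (hr : 2 ≤ r) (H : Finset (Finset V))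
    (huniform : ∀ f ∈ H, f.card = r)
    (hconn : HypergraphConnected H)
    (hcard : H.card > Fintype.card V)
    (hcycle : ∃ (e : Fin (r + 1) → Finset V) (c : Fin (r + 1) → V),
      IsBergeCycle H (r + 1) e c) :
    ∃ (e : Fin (r + 1) → Finset V) (p : Fin (r + 2) → V),
      IsBergePath H (r + 1) e p := by
  classical
  obtain ⟨eC, c, hcinjE, hcinjV, hcH, hcyc⟩ := hcycle
  -- cycle property in Fin-arithmetic form
  have hvadd : ∀ i : Fin (r+1), c (i + 1) ∈ eC i := by
    intro i
    have h2 := (hcyc i).2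
    have : (⟨(i.val + 1) % (r+1), Nat.mod_lt _ i.pos⟩ : Fin (r+1)) = i + 1 := by
      ext
      simp [Fin.add_def, Fin.val_one', Nat.mod_eq_of_lt (show 1 < r + 1 by omega)]
    rwa [this] at h2
  -- Step A: a vertex outside the cycle
  have hw : ∃ w : V, w ∉ Set.range c := by
    by_contra h
    push_neg at h
    have hsurj : Function.Surjective c := fun w => h w
    have hcardV : Fintype.card V = r + 1 := by
      rw [← Fintype.card_of_bijective ⟨hcinjV, hsurj⟩, Fintype.card_fin]
    have hsub : H ⊆ Finset.univ.powersetCard r := by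
      intro f hf
      rw [Finset.mem_powersetCard_univ]
      exact huniform f hf
    have hle := Finset.card_le_card hsub
    rw [Finset.card_powersetCard, Finset.card_univ, hcardV,
      Nat.choose_succ_self_right] at hle
    omega
  obtain ⟨w, hwS⟩ := hw
  -- Step B: first entry of a path from w into the cycle
  obtain ⟨k, ep, p, ⟨hepinj, hpinj, hepH, hpadj⟩, hp0, hpl⟩ := hconn w (c 0)
  have hQ : ∃ j, ∃ h : j < k + 1, p ⟨j, h⟩ ∈ Set.range c := by
    refine ⟨k, by omega, ?_⟩
    have hh : (⟨k, by omega⟩ : Fin (k+1)) = Fin.last k := rfl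
    rw [hh, hpl]; exact ⟨0, rfl⟩
  obtain ⟨hj₀lt, hj₀mem⟩ := Nat.find_spec hQ
  set j₀ := Nat.find hQ with hj₀def
  have hj₀pos : 0 < j₀ := by
    rcases Nat.eq_zero_or_pos j₀ with h | h
    · exfalso
      have e0 : (⟨j₀, hj₀lt⟩ : Fin (k+1)) = (0 : Fin (k+1)) := by ext; simp [h]
      rw [e0, hp0] at hj₀mem
      exact hwS hj₀mem
    · exact h
  have hj'k : j₀ - 1 < k := by omega
  have hmin := Nat.find_min hQ (show j₀ - 1 < j₀ by omega)
  push_neg at hmin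
  have hadj := hpadj ⟨j₀ - 1, hj'k⟩
  set w' := p ⟨j₀ - 1, by omega⟩ with hw'def
  set g := ep ⟨j₀ - 1, hj'k⟩ with hgdef
  have hw'S : w' ∉ Set.range c := hmin (by omega)
  have hw'g : w' ∈ g := hadj.1
  have hgH : g ∈ H := hepH _
  have htg : ∃ t, c t ∈ g := by
    obtain ⟨t, ht⟩ := hj₀mem
    refine ⟨t, ?_⟩
    have hsucc : (Fin.succ ⟨j₀ - 1, hj'k⟩ : Fin (k+1)) = ⟨j₀, hj₀lt⟩ := by
      ext; simp; omega
    rw [ht, ← hsucc]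
    exact hadj.2
  -- Step C: choose attachment point m
  obtain ⟨m, hcm, hgm⟩ : ∃ m : Fin (r+1), c m ∈ g ∧
      ∀ i : Fin (r+1), g = eC i → i + 1 = m := by
    by_cases hgr : ∃ s, g = eC s
    · obtain ⟨s, hs⟩ := hgr
      refine ⟨s + 1, hs ▸ hvadd s, fun i hi => ?_⟩
      rw [hcinjE (hi.symm.trans hs)]
    · push_neg at hgr
      obtain ⟨t, htg⟩ := htg
      exact ⟨t, htg, fun i hi => absurd hi (hgr i)⟩
  -- Step D: build the path
  have hcast : ∀ a : ℕ, a < r + 1 → ((a : Fin (r+1)) : ℕ) = a :=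
    fun a ha => Fin.val_cast_of_lt ha
  refine ⟨fun i => if i.val = 0 then g else eC (m + ((i.val - 1 : ℕ) : Fin (r+1))),
          fun i => if i.val = 0 then w' else c (m + ((i.val - 1 : ℕ) : Fin (r+1))),
          ?_, ?_, ?_, ?_⟩
  · -- edges injective
    intro i j hij
    simp only at hij
    by_cases hi : i.val = 0 <;> by_cases hj : j.val = 0
    · ext; omega
    · exfalso
      rw [if_pos hi, if_neg hj] at hij
      have h1 := hgm _ hij
      have h2 : ((j.val - 1 : ℕ) : Fin (r+1)) + 1 = 0 := by
        rw [add_assoc] at h1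
        exact add_left_cancel (h1.trans (add_zero m).symm)
      have h3 : ((j.val : ℕ) : Fin (r+1)) = 0 := by
        have hc : ((j.val - 1 : ℕ) : Fin (r+1)) + 1 = ((j.val - 1 + 1 : ℕ) : Fin (r+1)) := by
          push_cast; ring
        rw [hc, Nat.sub_add_cancel (by omega)] at h2
        exact h2
      have := congrArg Fin.val h3
      rw [hcast j.val j.isLt] at this
      simp at this
      exact hj (by simp [this])
    · exfalso
      rw [if_neg hi, if_pos hj] at hij
      have h1 := hgm _ hij.symm
      have h2 : ((i.val - 1 : ℕ) : Fin (r+1)) + 1 = 0 := by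
        rw [add_assoc] at h1
        exact add_left_cancel (h1.trans (add_zero m).symm)
      have h3 : ((i.val : ℕ) : Fin (r+1)) = 0 := by
        have hc : ((i.val - 1 : ℕ) : Fin (r+1)) + 1 = ((i.val - 1 + 1 : ℕ) : Fin (r+1)) := by
          push_cast; ring
        rw [hc, Nat.sub_add_cancel (by omega)] at h2
        exact h2
      have := congrArg Fin.val h3
      rw [hcast i.val i.isLt] at this
      simp at this
      exact hi (by simp [this])
    · rw [if_neg hi, if_neg hj] at hij
      have h1 := add_left_cancel (hcinjE hij)
      have h2 := congrArg Fin.val h1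
      rw [hcast (i.val - 1) (by omega), hcast (j.val - 1) (by omega)] at h2
      ext; omega
  · -- vertices injective
    intro i j hij
    simp only at hij
    by_cases hi : i.val = 0 <;> by_cases hj : j.val = 0
    · ext; omega
    · exfalso
      rw [if_pos hi, if_neg hj] at hij
      exact hw'S ⟨_, hij.symm⟩
    · exfalso
      rw [if_neg hi, if_pos hj] at hij
      exact hw'S ⟨_, hij⟩
    · rw [if_neg hi, if_neg hj] at hij
      have h1 := add_left_cancel (hcinjV hij)
      have h2 := congrArg Fin.val h1
      rw [hcast (i.val - 1) (by omega), hcast (j.val - 1) (by omega)] at h2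
      ext; omega
  · -- edges in H
    intro i
    dsimp only
    split
    · exact hgH
    · exact hcH _
  · -- adjacency
    intro i
    have hcs : (i.castSucc : Fin (r+2)).val = i.val := rfl
    have hsc : (i.succ : Fin (r+2)).val = i.val + 1 := rfl
    by_cases hi : i.val = 0
    · constructor
      · simp only [hcs, hsc, hi, if_pos]
        exact hw'g
      · simp only [hcs, hsc, hi]
        norm_num
        exact hcm
    · constructor
      · simp only [hcs, hsc, if_neg hi]
        exact (hcyc _).1
      · simp only [hcs, hsc, if_neg hi]
        have hne : ¬ (i.val + 1 = 0) := by omega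
        rw [if_neg hne]
        have hc : ((i.val + 1 - 1 : ℕ) : Fin (r+1)) = ((i.val - 1 : ℕ) : Fin (r+1)) + 1 := by
          have : i.val + 1 - 1 = (i.val - 1) + 1 := by omega
          rw [this]; push_cast; ring
        rw [hc, ← add_assoc]
        exact hvadd _
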